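/- arXiv:1203.2664 — 2 statements merged into one kernel-verified Lean document; each statement's English description precedes it below -/
import Mathlib

section
/- Let A, B, C be subspaces of E. If A ⊥g B and A ∩ B ⊊ C ⊆ B, then A ⊥g C. -/
/-- `Perp X Y`: every vector in the direction of `X` is orthogonal to every
vector in the direction of `Y`. -/
def Perp {E : Type*} [NormedAddCommGroup E] [InnerProductSpace ℝ E]
    (X Y : AffineSubspace ℝ E) : Prop :=
  ∀ u ∈ X.direction, ∀ v ∈ Y.direction, (inner ℝ u v : ℝ) = 0

/-- `PerpX X Y`: `X ⊥ Y` and `X ∩ Y ≠ ∅`. -/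
def PerpX {E : Type*} [NormedAddCommGroup E] [InnerProductSpace ℝ E]
    (X Y : AffineSubspace ℝ E) : Prop :=
  Perp X Y ∧ ((X : Set E) ∩ (Y : Set E)).Nonempty

/-- `PerpGo X₁ X₂`: the relation `⊥g∘`. -/
def PerpGo {E : Type*} [NormedAddCommGroup E] [InnerProductSpace ℝ E]
    (X₁ X₂ : AffineSubspace ℝ E) : Prop :=
  ∃ q : E, q ∈ X₁ ⊓ X₂ ∧ ∃ Z₁ Z₂ : AffineSubspace ℝ E,
    q ∈ Z₁ ∧ q ∈ Z₂ ∧ PerpX Z₁ (X₁ ⊓ X₂) ∧ PerpX Z₂ (X₁ ⊓ X₂) ∧ PerpX Z₁ Z₂ ∧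
    (X₁ ⊓ X₂) ⊔ Z₁ = X₁ ∧ (X₁ ⊓ X₂) ⊔ Z₂ = X₂

/-- `PerpG X₁ X₂`: the relation `⊥g`. -/
def PerpG {E : Type*} [NormedAddCommGroup E] [InnerProductSpace ℝ E]
    (X₁ X₂ : AffineSubspace ℝ E) : Prop :=
  PerpGo X₁ X₂ ∧ X₁ ⊓ X₂ ≠ X₁ ∧ X₁ ⊓ X₂ ≠ X₂

/-- Dimension of an affine subspace: the dimension of its direction. -/
noncomputable def adim {E : Type*} [NormedAddCommGroup E] [InnerProductSpace ℝ E]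
    (X : AffineSubspace ℝ E) : ℕ :=
  Module.finrank ℝ X.direction

variable {E : Type*} [NormedAddCommGroup E] [InnerProductSpace ℝ E] [FiniteDimensional ℝ E]

omit [FiniteDimensional ℝ E] in
lemma dir_sup_of_mem {s₁ s₂ : AffineSubspace ℝ E} {q : E} (h₁ : q ∈ s₁) (h₂ : q ∈ s₂) :
    (s₁ ⊔ s₂).direction = s₁.direction ⊔ s₂.direction := by
  rw [AffineSubspace.direction_sup h₁ h₂, vsub_self]
  simp

theorem stmt10 (A B C : AffineSubspace ℝ E)
    (hA : (A : Set E).Nonempty) (hB : (B : Set E).Nonempty) (hC : (C : Set E).Nonempty)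
    (h₁ : PerpG A B) (h₂ : A ⊓ B < C) (h₃ : C ≤ B) :
    PerpG A C := by
  obtain ⟨⟨q, hq, Z₁, Z₂, hqZ₁, hqZ₂, ⟨hP1, _⟩, ⟨hP2, _⟩, ⟨hP12, _⟩, hsup₁, hsup₂⟩,
    hne₁, hne₂⟩ := h₁
  have hABC : A ⊓ B ≤ C := h₂.le
  -- A ⊓ C = A ⊓ B
  have hAC : A ⊓ C = A ⊓ B := by
    apply le_antisymm
    · exact le_inf inf_le_left (le_trans inf_le_right h₃)
    · exact le_inf inf_le_left hABC
  have hqC : q ∈ C := hABC hq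
  have hqA : q ∈ A := (AffineSubspace.mem_inf_iff q A B).1 hq |>.1
  -- define Z₂' with direction C.direction ⊓ Z₂.direction through q
  set W : Submodule ℝ E := C.direction ⊓ Z₂.direction with hW
  set Z₂' : AffineSubspace ℝ E := AffineSubspace.mk' q W with hZ₂'
  have hqZ₂' : q ∈ Z₂' := AffineSubspace.self_mem_mk' q W
  have hdZ₂' : Z₂'.direction = W := AffineSubspace.direction_mk' q W
  -- key directions
  have hDle : (A ⊓ B).direction ≤ C.direction := AffineSubspace.direction_le hABC
  have hBdir : B.direction = (A ⊓ B).direction ⊔ Z₂.direction := by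
    conv_lhs => rw [← hsup₂]
    exact dir_sup_of_mem hq hqZ₂
  have hCdir : C.direction = (A ⊓ B).direction ⊔ Z₂'.direction := by
    apply le_antisymm
    · intro w hw
      have hwB : w ∈ (A ⊓ B).direction ⊔ Z₂.direction := by
        rw [← hBdir]; exact AffineSubspace.direction_le h₃ hw
      rw [Submodule.mem_sup] at hwB
      obtain ⟨d, hd, z, hz, rfl⟩ := hwB
      have hzC : z ∈ C.direction := by
        have : (d + z) - d ∈ C.direction := sub_mem hw (hDle hd)
        simpa using this
      rw [Submodule.mem_sup]
      exact ⟨d, hd, z, by rw [hdZ₂']; exact ⟨hzC, hz⟩, rfl⟩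
    · apply sup_le hDle
      rw [hdZ₂']; exact inf_le_left
  -- (A ⊓ C) ⊔ Z₂' = C
  have hsupC : (A ⊓ C) ⊔ Z₂' = C := by
    rw [hAC]
    apply AffineSubspace.ext_of_direction_eq
    · rw [dir_sup_of_mem hq hqZ₂', hCdir]
    · exact ⟨q, (le_sup_left : A ⊓ B ≤ _) hq, hqC⟩
  refine ⟨⟨q, by rw [hAC]; exact hq, Z₁, Z₂', hqZ₁, hqZ₂', ?_, ?_, ?_, ?_, hsupC⟩, ?_, ?_⟩
  · refine ⟨?_, ⟨q, hqZ₁, by rw [hAC]; exact hq⟩⟩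
    rw [hAC]; exact hP1
  · refine ⟨?_, ⟨q, hqZ₂', by rw [hAC]; exact hq⟩⟩
    intro u hu v hv
    rw [hAC] at hv
    exact hP2 u (by rw [hdZ₂'] at hu; exact hu.2) v hv
  · refine ⟨?_, ⟨q, hqZ₁, hqZ₂'⟩⟩
    intro u hu v hv
    exact hP12 u hu v (by rw [hdZ₂'] at hv; exact hv.2)
  · rw [hAC]; exact hsup₁
  · rw [hAC]; exact hne₁
  · rw [hAC]; exact ne_of_lt h₂
end

section
/- Let A, B, C be subspaces of E. If A ⊥g B and A ∩ B ⊆ C ⊊ A, then A ⊥g (B ⊔ C). -/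
variable {E : Type*} [NormedAddCommGroup E] [InnerProductSpace ℝ E] [FiniteDimensional ℝ E]

omit [FiniteDimensional ℝ E] in
private lemma direction_sup_of_mem {s1 s2 : AffineSubspace ℝ E} {q : E}
    (h1 : q ∈ s1) (h2 : q ∈ s2) :
    (s1 ⊔ s2).direction = s1.direction ⊔ s2.direction := by
  rw [AffineSubspace.direction_sup h1 h2, vsub_self]
  simp

theorem stmt11 (A B C : AffineSubspace ℝ E)
    (hA : (A : Set E).Nonempty) (hB : (B : Set E).Nonempty) (hC : (C : Set E).Nonempty)
    (h₁ : PerpG A B) (h₂ : A ⊓ B ≤ C) (h₃ : C < A) :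
    PerpG A (B ⊔ C) := by
  obtain ⟨⟨q, hq, Z₁, Z₂, hqZ₁, hqZ₂, ⟨hP1, -⟩, ⟨hP2, -⟩, ⟨hP12, -⟩, hsup₁, hsup₂⟩,
    hne₁, hne₂⟩ := h₁
  have hqA : q ∈ A := hq.1
  have hqB : q ∈ B := hq.2
  have hqC : q ∈ C := h₂ hq
  set U := (A ⊓ B).direction with hU
  set W₁ := Z₁.direction with hW₁
  set W₂ := Z₂.direction with hW₂
  set V := C.direction with hV
  have hAd : A.direction = U ⊔ W₁ := by
    conv_lhs => rw [← hsup₁]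
    exact direction_sup_of_mem hq hqZ₁
  have hBd : B.direction = U ⊔ W₂ := by
    conv_lhs => rw [← hsup₂]
    exact direction_sup_of_mem hq hqZ₂
  have hUV : U ≤ V := AffineSubspace.direction_le h₂
  have hVA : V ≤ U ⊔ W₁ := hAd ▸ AffineSubspace.direction_le h₃.le
  -- decomposition of V
  have hVdec : V ≤ U ⊔ (V ⊓ W₁) := by
    intro v hv
    obtain ⟨u, hu, w, hw, rfl⟩ := Submodule.mem_sup.1 (hVA hv)
    have hwV : w ∈ V := by
      have : (u + w) - u ∈ V := sub_mem hv (hUV hu)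
      simpa using this
    exact Submodule.mem_sup.2 ⟨u, hu, w, ⟨hwV, hw⟩, rfl⟩
  have hBCd : (B ⊔ C).direction = V ⊔ W₂ := by
    rw [direction_sup_of_mem hqB hqC, hBd, sup_comm U W₂, sup_assoc, sup_eq_right.2 hUV,
      sup_comm]
  -- the key identity A ⊓ (B ⊔ C) = C
  have hKey : A ⊓ (B ⊔ C) = C := by
    refine le_antisymm ?_ (le_inf h₃.le le_sup_right)
    intro x hx
    have hxA : x ∈ A := hx.1
    have hxBC : x ∈ B ⊔ C := hx.2
    have hxd : x -ᵥ q ∈ V ⊔ W₂ := hBCd ▸ AffineSubspace.vsub_mem_direction hxBC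
      (le_sup_right (a := B) hqC)
    obtain ⟨v, hv, w, hw, heq⟩ := Submodule.mem_sup.1 hxd
    have hwA : w ∈ U ⊔ W₁ := by
      have h1 : x -ᵥ q ∈ U ⊔ W₁ := hAd ▸ AffineSubspace.vsub_mem_direction hxA hqA
      have : (x -ᵥ q) - v ∈ U ⊔ W₁ := sub_mem h1 (hVA hv)
      rw [← heq] at this
      simpa using this
    have hw0 : w = 0 := by
      obtain ⟨a, ha, b, hb, heq2⟩ := Submodule.mem_sup.1 hwA
      have h1 : (inner ℝ w a : ℝ) = 0 := hP2 w hw a ha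
      have h2 : (inner ℝ w b : ℝ) = 0 := by
        rw [real_inner_comm]; exact hP12 b hb w hw
      have : (inner ℝ w w : ℝ) = 0 := by
        nth_rewrite 2 [← heq2]
        rw [inner_add_right, h1, h2, add_zero]
      exact inner_self_eq_zero.1 this
    have hxV : x -ᵥ q ∈ V := by rw [← heq, hw0, add_zero]; exact hv
    have := AffineSubspace.vadd_mem_of_mem_direction hxV hqC
    simpa using this
  have hCne : C ≠ B ⊔ C := by
    intro h
    have hBC : B ≤ C := h ▸ le_sup_left
    exact hne₂ (inf_eq_right.2 (hBC.trans h₃.le))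
  refine ⟨?_, ?_, ?_⟩
  · -- PerpGo A (B ⊔ C)
    refine ⟨q, (by rw [hKey]; exact hqC), AffineSubspace.mk' q (W₁ ⊓ Vᗮ), AffineSubspace.mk' q W₂,
      AffineSubspace.self_mem_mk' _ _, AffineSubspace.self_mem_mk' _ _, ?_, ?_, ?_, ?_, ?_⟩
    · -- PerpX Z₁' C
      rw [hKey]
      refine ⟨?_, ⟨q, AffineSubspace.self_mem_mk' _ _, hqC⟩⟩
      intro u hu v hv
      rw [AffineSubspace.direction_mk'] at hu
      rw [real_inner_comm]
      exact hu.2 v hv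
    · -- PerpX Z₂' C
      rw [hKey]
      refine ⟨?_, ⟨q, AffineSubspace.self_mem_mk' _ _, hqC⟩⟩
      intro u hu v hv
      rw [AffineSubspace.direction_mk'] at hu
      obtain ⟨a, ha, b, hb, rfl⟩ := Submodule.mem_sup.1 (hVdec hv)
      rw [inner_add_right]
      have h1 : (inner ℝ u a : ℝ) = 0 := hP2 u hu a ha
      have h2 : (inner ℝ u b : ℝ) = 0 := by
        rw [real_inner_comm]; exact hP12 b hb.2 u hu
      rw [h1, h2, add_zero]
    · -- PerpX Z₁' Z₂'
      refine ⟨?_, ⟨q, AffineSubspace.self_mem_mk' _ _, AffineSubspace.self_mem_mk' _ _⟩⟩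
      intro u hu v hv
      rw [AffineSubspace.direction_mk'] at hu hv
      exact hP12 u hu.1 v hv
    · -- C ⊔ Z₁' = A
      rw [hKey]
      refine AffineSubspace.ext_of_direction_eq ?_
        ⟨q, le_sup_left (a := C) hqC, hqA⟩
      rw [direction_sup_of_mem hqC (AffineSubspace.self_mem_mk' _ _),
        AffineSubspace.direction_mk', hAd]
      refine le_antisymm (sup_le hVA (le_trans inf_le_left le_sup_right)) ?_
      refine sup_le (le_trans hUV le_sup_left) ?_
      intro w hw
      obtain ⟨p, hp, r, hr, rfl⟩ := Submodule.exists_add_mem_mem_orthogonal (K := V ⊓ W₁) w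
      have hrW₁ : r ∈ W₁ := by
        have : (p + r) - p ∈ W₁ := sub_mem hw hp.2
        simpa using this
      have hrV : r ∈ Vᗮ := by
        rw [Submodule.mem_orthogonal]
        intro v hv
        obtain ⟨a, ha, b, hb, rfl⟩ := Submodule.mem_sup.1 (hVdec hv)
        rw [inner_add_left]
        have h1 : (inner ℝ a r : ℝ) = 0 := by
          rw [real_inner_comm]; exact hP1 r hrW₁ a ha
        have h2 : (inner ℝ b r : ℝ) = 0 := (Submodule.mem_orthogonal _ _).1 hr b hb
        rw [h1, h2, add_zero]
      exact add_mem (le_sup_left (a := V) hp.1) (le_sup_right (a := V) ⟨hrW₁, hrV⟩)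
    · -- C ⊔ Z₂' = B ⊔ C
      rw [hKey]
      refine AffineSubspace.ext_of_direction_eq ?_
        ⟨q, le_sup_left (a := C) hqC, le_sup_right (a := B) hqC⟩
      rw [direction_sup_of_mem hqC (AffineSubspace.self_mem_mk' _ _),
        AffineSubspace.direction_mk', hBCd]
  · rw [hKey]; exact h₃.ne
  · rw [hKey]; exact hCne
end
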